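/- Suppose {D_0,D_1,D_2,D_3} is a symmetric difference family of type H in a finite abelian group G satisfying (d2), and {B_0,...,B_7} is a building family in a finite abelian group G'. Then the eight sets C_0,...,C_7 defined in the Kharaghani-type product construction (e.g., C_0 = D_0×B_0 ∪ D_1×B_1 ∪ D_2^c×B_2 ∪ D_3^c×B_3 ∪ D_0^c×B_4 ∪ D_1^c×B_5 ∪ D_2×B_6 ∪ D_3×B_7 ∪ Ē_0×{0_{G'}}, and C_1,...,C_7 by the analogous unions with the B-indices permuted as in the paper and center blocks Ē_1, Ē_0, Ē_1, E_0, E_1, E_0, E_1 respectively) form a symmetric difference family of type H_8* in G × G': each C_i is symmetric and Σ_{i=0}^{7} C_i² = 4(|G||G'|−1)·0 + 2(|G||G'|−3)·(G×G')* in ℤ[G×G']. -/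

import Mathlib

set_option maxRecDepth 100000
set_option maxHeartbeats 1000000


open Finset

noncomputable section

variable {G : Type*}

/-- The element of the group ring `ℤ[G]` associated to a finite subset `D ⊆ G`. -/
def grp [AddCommGroup G] [DecidableEq G] (D : Finset G) : AddMonoidAlgebra ℤ G :=
  ∑ x ∈ D, AddMonoidAlgebra.single x 1

/-- `D^{(-1)} = {-x : x ∈ D}`. -/
def negSet [AddCommGroup G] [DecidableEq G] (D : Finset G) : Finset G :=
  D.image (fun x => -x)

/-- A subset is symmetric if `D = -D`. -/
def IsSymmetric [AddCommGroup G] [DecidableEq G] (D : Finset G) : Prop :=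
  negSet D = D

/-- `G* = G \ {0}` as a finset. -/
def Gstar (G : Type*) [AddCommGroup G] [Fintype G] [DecidableEq G] : Finset G :=
  Finset.univ \ {0}

/-- A difference family of type `H`: four blocks with `λ = Σ|D_i| - |G|`. -/
def IsTypeH [AddCommGroup G] [Fintype G] [DecidableEq G] (D : Fin 4 → Finset G) : Prop :=
  ∑ i, grp (D i) * grp (negSet (D i)) =
    ((∑ i, ((D i).card : ℤ)) - (Fintype.card G : ℤ)) • grp (Finset.univ : Finset G)
      + (Fintype.card G : ℤ) • AddMonoidAlgebra.single (0 : G) (1 : ℤ)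

/-- A difference family of type `H_4^*`: four blocks with `λ = Σ|B_i| - (|G|+1)`. -/
def IsTypeH4star [AddCommGroup G] [Fintype G] [DecidableEq G] (B : Fin 4 → Finset G) : Prop :=
  ∑ i, grp (B i) * grp (negSet (B i)) =
    ((∑ i, ((B i).card : ℤ)) - ((Fintype.card G : ℤ) + 1)) • grp (Finset.univ : Finset G)
      + ((Fintype.card G : ℤ) + 1) • AddMonoidAlgebra.single (0 : G) (1 : ℤ)

/-- A difference family of type `H_2^*`: two blocks with `λ = Σ|S_i| - (|G|+1)/2`. -/
def IsTypeH2star [AddCommGroup G] [Fintype G] [DecidableEq G] (S : Fin 2 → Finset G) : Prop :=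
  ∑ i, grp (S i) * grp (negSet (S i)) =
    ((∑ i, ((S i).card : ℤ)) - ((Fintype.card G : ℤ) + 1) / 2) • grp (Finset.univ : Finset G)
      + (((Fintype.card G : ℤ) + 1) / 2) • AddMonoidAlgebra.single (0 : G) (1 : ℤ)

/-- Condition (d3). -/
def CondD3 [AddCommGroup G] [Fintype G] [DecidableEq G] (D : Fin 4 → Finset G) : Prop :=
  grp (D 0) * grp (negSet (D 2)) + grp (D 2) * grp (negSet (D 0))
    + grp (D 1) * grp (negSet (D 3)) + grp (D 3) * grp (negSet (D 1)) =
    ((∑ i, ((D i).card : ℤ)) - (Fintype.card G : ℤ) + 1) • grp (Finset.univ : Finset G)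

/-- Condition (c1). -/
def CondC1 [AddCommGroup G] [Fintype G] [DecidableEq G] (S : Fin 4 → Finset G) : Prop :=
  grp (S 0) * grp (negSet (S 2)) + grp (S 2) * grp (negSet (S 0))
    + grp (S 1) * grp (negSet (S 3)) + grp (S 3) * grp (negSet (S 1)) =
    ((∑ i, ((S i).card : ℤ)) - (Fintype.card G : ℤ)) • grp (Finset.univ : Finset G)

/-- Condition (d2). -/
def CondD2 [AddCommGroup G] [Fintype G] [DecidableEq G] (D : Fin 4 → Finset G) : Prop :=
  ∃ E₀ E₁ : Finset G, E₀ ⊆ Gstar G ∧ E₁ ⊆ Gstar G ∧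
    grp (D 0) + grp (D 1) - grp (D 2) - grp (D 3) = grp E₀ - grp (Gstar G \ E₀) ∧
    grp (D 0) + grp (D 3) - grp (D 1) - grp (D 2) = grp E₁ - grp (Gstar G \ E₁) ∧
    IsTypeH4star ![E₀, E₁, Gstar G \ E₀, Gstar G \ E₁]

/-- A building family: eight symmetric, pairwise disjoint subsets partitioning `G*`,
satisfying (a3) and (a4). -/
def IsBuildingFamily [AddCommGroup G] [Fintype G] [DecidableEq G] (A : Fin 8 → Finset G) : Prop :=
  (∀ i, IsSymmetric (A i)) ∧
  (∀ i j, i ≠ j → Disjoint (A i) (A j)) ∧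
  (Finset.univ.biUnion A = Gstar G) ∧
  IsTypeH4star ![A 0 ∪ A 1 ∪ A 6 ∪ A 7, A 2 ∪ A 3 ∪ A 4 ∪ A 5,
    A 0 ∪ A 3 ∪ A 5 ∪ A 6, A 1 ∪ A 2 ∪ A 4 ∪ A 7] ∧
  (∑ i, grp (A i) * grp (A i)) - (∑ i, grp (A i) * grp (A (i + 4))) =
    ((Fintype.card G : ℤ) - 1) • AddMonoidAlgebra.single (0 : G) (1 : ℤ)
      + ((grp (A 0) + grp (A 1) + grp (A 2) + grp (A 3))
        - (grp (A 4) + grp (A 5) + grp (A 6) + grp (A 7)))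

end
/-- The permutation of `B`-indices used in the blocks `C_0, ..., C_7` of the
Kharaghani-type product construction. -/
def bIdx : Fin 8 → Fin 8 → Fin 8 :=
  ![![0, 1, 2, 3, 4, 5, 6, 7], ![1, 4, 3, 6, 5, 0, 7, 2],
    ![2, 3, 0, 1, 6, 7, 4, 5], ![3, 6, 1, 4, 7, 2, 5, 0],
    ![4, 5, 6, 7, 0, 1, 2, 3], ![5, 0, 7, 2, 1, 4, 3, 6],
    ![6, 7, 4, 5, 2, 3, 0, 1], ![7, 2, 5, 0, 3, 6, 1, 4]]

set_option linter.unusedSectionVars false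

noncomputable section KhAux

variable {G : Type*} [AddCommGroup G] [DecidableEq G]

lemma kh_mem_negSet {S : Finset G} {a : G} : a ∈ negSet S ↔ -a ∈ S := by
  simp only [negSet, Finset.mem_image]
  constructor
  · rintro ⟨b, hb, rfl⟩; simpa using hb
  · intro h; exact ⟨-a, h, by simp⟩

lemma kh_isSymmetric_iff {S : Finset G} : IsSymmetric S ↔ ∀ a, -a ∈ S ↔ a ∈ S := by
  unfold IsSymmetric
  rw [Finset.ext_iff]
  constructor
  · intro h a; rw [← h a, kh_mem_negSet]
  · intro h a; rw [kh_mem_negSet, h a]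

lemma kh_symm_sdiff {S T : Finset G} (hS : IsSymmetric S) (hT : IsSymmetric T) :
    IsSymmetric (S \ T) := by
  rw [kh_isSymmetric_iff] at *
  intro a; simp [Finset.mem_sdiff, hS a, hT a]

lemma kh_symm_union {S T : Finset G} (hS : IsSymmetric S) (hT : IsSymmetric T) :
    IsSymmetric (S ∪ T) := by
  rw [kh_isSymmetric_iff] at *
  intro a; simp [Finset.mem_union, hS a, hT a]

lemma kh_grp_union {S T : Finset G} (h : Disjoint S T) : grp (S ∪ T) = grp S + grp T := by
  unfold grp; rw [Finset.sum_union h]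

lemma kh_grp_sdiff {S T : Finset G} (h : T ⊆ S) : grp (S \ T) = grp S - grp T := by
  unfold grp; rw [Finset.sum_sdiff_eq_sub h]

lemma kh_grp_singleton_zero : grp ({0} : Finset G) = 1 := by
  unfold grp; rw [Finset.sum_singleton]; exact (AddMonoidAlgebra.one_def).symm

lemma kh_grp_biUnion {ι : Type*} [DecidableEq ι] {s : Finset ι} {f : ι → Finset G}
    (h : ∀ i ∈ s, ∀ j ∈ s, i ≠ j → Disjoint (f i) (f j)) :
    grp (s.biUnion f) = ∑ i ∈ s, grp (f i) := by
  unfold grp; exact Finset.sum_biUnion h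

variable [Fintype G]

lemma kh_symm_compl {S : Finset G} (hS : IsSymmetric S) : IsSymmetric Sᶜ := by
  rw [kh_isSymmetric_iff] at *
  intro a; simp [Finset.mem_compl, hS a]

lemma kh_symm_Gstar : IsSymmetric (Gstar G) := by
  rw [kh_isSymmetric_iff]
  intro a; simp [Gstar, neg_eq_zero]

lemma kh_grp_Gstar : grp (Gstar G) = grp (univ : Finset G) - 1 := by
  unfold Gstar
  rw [kh_grp_sdiff (by simp), kh_grp_singleton_zero]

lemma kh_grp_compl (S : Finset G) : grp Sᶜ = grp (univ : Finset G) - grp S := by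
  rw [Finset.compl_eq_univ_sdiff, kh_grp_sdiff (Finset.subset_univ S)]

lemma kh_card_Gstar : (Gstar G).card = Fintype.card G - 1 := by
  unfold Gstar
  rw [Finset.card_sdiff_of_subset (by simp)]
  simp

lemma kh_grp_univ_mul_single (x : G) :
    grp (univ : Finset G) * AddMonoidAlgebra.single x (1 : ℤ) = grp (univ : Finset G) := by
  unfold grp
  rw [Finset.sum_mul]
  simp only [AddMonoidAlgebra.single_mul_single, mul_one]
  exact Fintype.sum_equiv (Equiv.addRight x) _ _ (fun g => rfl)

lemma kh_grp_univ_absorb (S : Finset G) :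
    grp (univ : Finset G) * grp S = (S.card : ℤ) • grp (univ : Finset G) := by
  have hS : grp S = ∑ x ∈ S, AddMonoidAlgebra.single x (1:ℤ) := rfl
  rw [hS, Finset.mul_sum]
  rw [Finset.sum_congr rfl (fun x _ => kh_grp_univ_mul_single x), Finset.sum_const,
    natCast_zsmul]

variable {H : Type*} [AddCommGroup H] [DecidableEq H]

def embL (G H : Type*) [AddCommGroup G] [AddCommGroup H] :
    AddMonoidAlgebra ℤ G →+* AddMonoidAlgebra ℤ (G × H) :=
  AddMonoidAlgebra.mapDomainRingHom ℤ (AddMonoidHom.inl G H)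

def embR (G H : Type*) [AddCommGroup G] [AddCommGroup H] :
    AddMonoidAlgebra ℤ H →+* AddMonoidAlgebra ℤ (G × H) :=
  AddMonoidAlgebra.mapDomainRingHom ℤ (AddMonoidHom.inr G H)

lemma kh_embL_grp (S : Finset G) :
    embL G H (grp S) = ∑ x ∈ S, AddMonoidAlgebra.single ((x, 0) : G × H) (1:ℤ) := by
  unfold embL grp
  rw [map_sum]
  refine Finset.sum_congr rfl fun x _ => ?_
  simp [AddMonoidAlgebra.mapDomainRingHom_apply, Finsupp.mapDomain_single]

lemma kh_embR_grp (T : Finset H) :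
    embR G H (grp T) = ∑ y ∈ T, AddMonoidAlgebra.single ((0, y) : G × H) (1:ℤ) := by
  unfold embR grp
  rw [map_sum]
  refine Finset.sum_congr rfl fun x _ => ?_
  simp [AddMonoidAlgebra.mapDomainRingHom_apply, Finsupp.mapDomain_single]

lemma kh_grp_prod (S : Finset G) (T : Finset H) :
    grp (S ×ˢ T) = embL G H (grp S) * embR G H (grp T) := by
  rw [kh_embL_grp, kh_embR_grp, Finset.sum_mul_sum]
  unfold grp
  rw [Finset.sum_product]
  refine Finset.sum_congr rfl fun x _ => Finset.sum_congr rfl fun y _ => ?_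
  rw [AddMonoidAlgebra.single_mul_single]
  norm_num

lemma kh_disjoint_prod {S S' : Finset G} {T T' : Finset H} (h : Disjoint T T') :
    Disjoint (S ×ˢ T) (S' ×ˢ T') := by
  rw [Finset.disjoint_left]
  rintro ⟨a, b⟩ hab hab'
  simp only [Finset.mem_product] at hab hab'
  exact (Finset.disjoint_left.mp h) hab.2 hab'.2

end KhAux



theorem kh_key {R : Type*} [CommRing R]
    (x0 x1 x2 x3 p q u y0 y1 y2 y3 y4 y5 y6 y7 u2 v w n0 n1 n2 n3 e0 e1 : R)
    (hr1 : x0*x0 + x1*x1 + x2*x2 + x3*x3 = (n0+n1+n2+n3-v)*u + v)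
    (hr2 : x0+x1-x2-x3 = 2*p - u + 1)
    (hr3 : x0+x3-x1-x2 = 2*q - u + 1)
    (hr4 : p*p + q*q + (u-1-p)*(u-1-p) + (u-1-q)*(u-1-q) = (v-3)*u + (v+1))
    (hr5 : y0+y1+y2+y3+y4+y5+y6+y7 = u2 - 1)
    (hr6 : (y0+y1+y6+y7)*(y0+y1+y6+y7) + (y2+y3+y4+y5)*(y2+y3+y4+y5)
        + (y0+y3+y5+y6)*(y0+y3+y5+y6) + (y1+y2+y4+y7)*(y1+y2+y4+y7) = (w-3)*u2 + (w+1))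
    (hr7 : (y0*y0+y1*y1+y2*y2+y3*y3+y4*y4+y5*y5+y6*y6+y7*y7)
        - (y0*y4+y1*y5+y2*y6+y3*y7+y4*y0+y5*y1+y6*y2+y7*y3)
        = (w-1) + ((y0+y1+y2+y3) - (y4+y5+y6+y7)))
    (hau : u*u = v*u) (hax0 : u*x0 = n0*u) (hax1 : u*x1 = n1*u)
    (hax2 : u*x2 = n2*u) (hax3 : u*x3 = n3*u)
    (hap : u*p = e0*u) (haq : u*q = e1*u) (hbu : u2*u2 = w*u2) :
    (x0 * y0 + x1 * y1 + (u - x2) * y2 + (u - x3) * y3 + (u - x0) * y4 + (u - x1) * y5 + x2 * y6 + x3 * y7 + (u - 1 - p)) * (x0 * y0 + x1 * y1 + (u - x2) * y2 + (u - x3) * y3 + (u - x0) * y4 + (u - x1) * y5 + x2 * y6 + x3 * y7 + (u - 1 - p)) + (x0 * y1 + x1 * y4 + (u - x2) * y3 + (u - x3) * y6 + (u - x0) * y5 + (u - x1) * y0 + x2 * y7 + x3 * y2 + (u - 1 - q)) * (x0 * y1 + x1 * y4 + (u - x2) * y3 + (u - x3) * y6 + (u - x0) * y5 + (u - x1) *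 y0 + x2 * y7 + x3 * y2 + (u - 1 - q)) + (x0 * y2 + x1 * y3 + (u - x2) * y0 + (u - x3) * y1 + (u - x0) * y6 + (u - x1) * y7 + x2 * y4 + x3 * y5 + (u - 1 - p)) * (x0 * y2 + x1 * y3 + (u - x2) * y0 + (u - x3) * y1 + (u - x0) * y6 + (u - x1) * y7 + x2 * y4 + x3 * y5 + (u - 1 - p)) + (x0 * y3 + x1 * y6 + (u - x2) * y1 + (u - x3) * y4 + (u - x0) * y7 + (u - x1) * y2 + x2 * y5 + x3 * y0 + (u - 1 - q)) * (x0 * y3 + x1 * y6 + (u - x2) * y1 + (u - x3) * y4 + (u - x0) * y7 + (u - x1) * y2 + x2 * y5 + x3 * y0 + (u - 1 - q)) + (x0 * y4 + x1 * y5 + (u - x2) * y6 + (u - x3) * y7 + (u - x0) * y0 + (u - x1) * y1 + x2 * y2 + x3 * y3 + p) * (x0 * y4 + x1 * y5 + (u - x2) * y6 + (u - x3) * y7 + (u - x0) * y0 + (u - x1) * y1 + x2 * y2 + x3 * y3 + p) + (x0 * y5 + x1 * y0 + (u - x2) * y7 + (u - x3) * y2 + (u - x0) * y1 + (u - x1)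 * y4 + x2 * y3 + x3 * y6 + q) * (x0 * y5 + x1 * y0 + (u - x2) * y7 + (u - x3) * y2 + (u - x0) * y1 + (u - x1) * y4 + x2 * y3 + x3 * y6 + q) + (x0 * y6 + x1 * y7 + (u - x2) * y4 + (u - x3) * y5 + (u - x0) * y2 + (u - x1) * y3 + x2 * y0 + x3 * y1 + p) * (x0 * y6 + x1 * y7 + (u - x2) * y4 + (u - x3) * y5 + (u - x0) * y2 + (u - x1) * y3 + x2 * y0 + x3 * y1 + p) + (x0 * y7 + x1 * y2 + (u - x2) * y5 + (u - x3) * y0 + (u - x0) * y3 + (u - x1) * y6 + x2 * y1 + x3 * y4 + q) * (x0 * y7 + x1 * y2 + (u - x2) * y5 + (u - x3) * y0 + (u - x0) * y3 + (u - x1) * y6 + x2 * y1 + x3 * y4 + q)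
    = 4*(v*w-1) + (2*(v*w-3))*(u*u2 - 1) := by
  linear_combination (2*y7*y7 + 2*y6*y6 + (-4*y5*y7) + 2*y5*y5 + (-4*y4*y6) + 2*y4*y4 + (-4*y3*y7) + 4*y3*y5 + 2*y3*y3 + (-4*y2*y6) + 4*y2*y4 + 2*y2*y2 + 4*y1*y7 + (-4*y1*y5) + (-4*y1*y3) + 2*y1*y1 + 4*y0*y6 + (-4*y0*y4) + (-4*y0*y2) + 2*y0*y0) * hr1 + (2*y7 + 2*y5 + 4*y5*y7 + 4*y4*y6 + (-2*y3) + (-4*y3*y5) + (-4*y2*y4) + (-2*y1) + (-4*y1*y7) + 4*y1*y3 + (-4*y0*y6) + 4*y0*y2 + u + (-u*u2*w) + u*y7*y7 + 2*u*y6 + 2*u*y6*y7 + u*y6*y6 + (-2*u*y5*y7) + 2*u*y5*y6 + u*y5*y5 + 2*u*y4 + 2*u*y4*y7 + (-2*u*y4*y6) + 2*u*y4*y5 + u*y4*y4 + 4*u*y3 + 2*u*y3*y7 + 2*u*y3*y6 + 6*u*y3*y5 + 2*u*y3*y4 + u*y3*y3 + 2*u*y2 + 2*u*y2*y7 + 2*u*y2*y6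 + 2*u*y2*y5 + 6*u*y2*y4 + 2*u*y2*y3 + u*y2*y2 + 4*u*y1 + 6*u*y1*y7 + 2*u*y1*y6 + 2*u*y1*y5 + 2*u*y1*y4 + (-2*u*y1*y3) + 2*u*y1*y2 + u*y1*y1 + 2*u*y0 + 2*u*y0*y7 + 6*u*y0*y6 + 2*u*y0*y5 + 2*u*y0*y4 + 2*u*y0*y3 + (-2*u*y0*y2) + 2*u*y0*y1 + u*y0*y0 + 2*q*y7 + (-2*q*y6) + 2*q*y5 + 4*q*y5*y7 + (-2*q*y4) + 4*q*y4*y6 + (-2*q*y3) + (-4*q*y3*y5) + 2*q*y2 + (-4*q*y2*y4) + (-2*q*y1) + (-4*q*y1*y7) + 4*q*y1*y3 + 2*q*y0 + (-4*q*y0*y6) + 4*q*y0*y2 + 2*p*y7 + 2*p*y6 + 2*p*y5 + 4*p*y5*y7 + 2*p*y4 + 4*p*y4*y6 + (-2*p*y3) + (-4*p*y3*y5) + (-2*p*y2) + (-4*p*y2*y4) + (-2*p*y1) + (-4*p*y1*y7) + 4*p*y1*y3 + (-2*p*y0) + (-4*p*y0*y6) + 4*p*y0*y2 + (-4*x3*y5*y7)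 + (-4*x3*y4*y6) + 4*x3*y3*y5 + 4*x3*y2*y4 + 4*x3*y1*y7 + (-4*x3*y1*y3) + 4*x3*y0*y6 + (-4*x3*y0*y2) + 4*x1*y5*y7 + 4*x1*y4*y6 + (-4*x1*y3*y5) + (-4*x1*y2*y4) + (-4*x1*y1*y7) + 4*x1*y1*y3 + (-4*x1*y0*y6) + 4*x1*y0*y2) * hr2 + (2*y6 + 2*y4 + (-2*y2) + (-2*y0) + u + (-u*u2*w) + 2*u*y7 + u*y7*y7 + 2*u*y6*y7 + u*y6*y6 + 2*u*y5 + 2*u*y5*y7 + 2*u*y5*y6 + u*y5*y5 + 2*u*y4*y7 + 2*u*y4*y6 + 2*u*y4*y5 + u*y4*y4 + 2*u*y3 + 2*u*y3*y7 + 2*u*y3*y6 + 2*u*y3*y5 + 2*u*y3*y4 + u*y3*y3 + 4*u*y2 + 2*u*y2*y7 + 2*u*y2*y6 + 2*u*y2*y5 + 2*u*y2*y4 + 2*u*y2*y3 + u*y2*y2 + 2*u*y1 + 2*u*y1*y7 + 2*u*y1*y6 + 2*u*y1*y5 + 2*u*y1*y4 + 2*u*y1*y3 + 2*u*y1*y2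 + u*y1*y1 + 4*u*y0 + 2*u*y0*y7 + 2*u*y0*y6 + 2*u*y0*y5 + 2*u*y0*y4 + 2*u*y0*y3 + 2*u*y0*y2 + 2*u*y0*y1 + u*y0*y0 + 2*q*y7 + 2*q*y6 + 2*q*y5 + 4*q*y5*y7 + 2*q*y4 + 4*q*y4*y6 + (-2*q*y3) + (-4*q*y3*y5) + (-2*q*y2) + (-4*q*y2*y4) + (-2*q*y1) + (-4*q*y1*y7) + 4*q*y1*y3 + (-2*q*y0) + (-4*q*y0*y6) + 4*q*y0*y2 + (-2*p*y7) + 2*p*y6 + (-2*p*y5) + (-4*p*y5*y7) + 2*p*y4 + (-4*p*y4*y6) + 2*p*y3 + 4*p*y3*y5 + (-2*p*y2) + 4*p*y2*y4 + 2*p*y1 + 4*p*y1*y7 + (-4*p*y1*y3) + (-2*p*y0) + 4*p*y0*y6 + (-4*p*y0*y2) + (-4*x2*y5*y7) + (-4*x2*y4*y6) + 4*x2*y3*y5 + 4*x2*y2*y4 + 4*x2*y1*y7 + (-4*x2*y1*y3) + 4*x2*y0*y6 + (-4*x2*y0*y2) + 4*x0*y5*y7 + 4*x0*y4*y6 + (-4*x0*y3*y5)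 + (-4*x0*y2*y4) + (-4*x0*y1*y7) + 4*x0*y1*y3 + (-4*x0*y0*y6) + 4*x0*y0*y2) * hr3 + (2 + (-2*u2*w) + 4*y7 + 4*y6 + 4*y6*y7 + 4*y5 + 8*y5*y7 + 4*y5*y6 + 4*y4 + 4*y4*y7 + 8*y4*y6 + 4*y4*y5 + 4*y3 + 8*y3*y7 + 4*y3*y6 + 4*y3*y4 + 4*y2 + 4*y2*y7 + 8*y2*y6 + 4*y2*y5 + 4*y2*y3 + 4*y1 + 4*y1*y6 + 8*y1*y5 + 4*y1*y4 + 8*y1*y3 + 4*y1*y2 + 4*y0 + 4*y0*y7 + 4*y0*y5 + 8*y0*y4 + 4*y0*y3 + 8*y0*y2 + 4*y0*y1) * hax2 + (2 + (-2*u2*w) + 4*y7 + 2*y7*y7 + 4*y6 + 4*y6*y7 + 2*y6*y6 + 4*y5 + 4*y5*y7 + 4*y5*y6 + 2*y5*y5 + 4*y4 + 4*y4*y7 + 4*y4*y6 + 4*y4*y5 + 2*y4*y4 + 4*y3 + 4*y3*y7 + 4*y3*y6 + 4*y3*y5 + 4*y3*y4 + 2*y3*y3 + 4*y2 + 4*y2*y7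 + 4*y2*y6 + 4*y2*y5 + 4*y2*y4 + 4*y2*y3 + 2*y2*y2 + 4*y1 + 4*y1*y7 + 4*y1*y6 + 4*y1*y5 + 4*y1*y4 + 4*y1*y3 + 4*y1*y2 + 2*y1*y1 + 4*y0 + 4*y0*y7 + 4*y0*y6 + 4*y0*y5 + 4*y0*y4 + 4*y0*y3 + 4*y0*y2 + 4*y0*y1 + 2*y0*y0) * hap + (2 + (-2*u2*w) + 4*y7 + 2*y7*y7 + 4*y6 + 4*y6*y7 + 2*y6*y6 + 4*y5 + 4*y5*y7 + 4*y5*y6 + 2*y5*y5 + 4*y4 + 4*y4*y7 + 4*y4*y6 + 4*y4*y5 + 2*y4*y4 + 4*y3 + 4*y3*y7 + 4*y3*y6 + 4*y3*y5 + 4*y3*y4 + 2*y3*y3 + 4*y2 + 4*y2*y7 + 4*y2*y6 + 4*y2*y5 + 4*y2*y4 + 4*y2*y3 + 2*y2*y2 + 4*y1 + 4*y1*y7 + 4*y1*y6 + 4*y1*y5 + 4*y1*y4 + 4*y1*y3 + 4*y1*y2 + 2*y1*y1 + 4*y0 + 4*y0*y7 + 4*y0*y6 + 4*y0*y5 + 4*y0*y4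 + 4*y0*y3 + 4*y0*y2 + 4*y0*y1 + 2*y0*y0) * haq + ((-2) + 2*u2*w + (-2*y7) + 2*y7*y7 + (-2*y6) + 2*y6*y6 + (-2*y5) + (-8*y5*y7) + 2*y5*y5 + (-2*y4) + (-8*y4*y6) + 2*y4*y4 + 2*y3 + (-4*y3*y7) + 8*y3*y5 + 2*y3*y3 + 2*y2 + (-4*y2*y6) + 8*y2*y4 + 2*y2*y2 + 2*y1 + 8*y1*y7 + (-4*y1*y5) + (-8*y1*y3) + 2*y1*y1 + 2*y0 + 8*y0*y6 + (-4*y0*y4) + (-8*y0*y2) + 2*y0*y0) * hau + ((-2*y7*y7) + (-2*y6*y6) + 4*y5*y7 + (-2*y5*y5) + 4*y4*y6 + (-2*y4*y4) + 4*y3*y7 + (-4*y3*y5) + (-2*y3*y3) + 4*y2*y6 + (-4*y2*y4) + (-2*y2*y2) + (-4*y1*y7) + 4*y1*y5 + 4*y1*y3 + (-2*y1*y1) + (-4*y0*y6) + 4*y0*y4 + 4*y0*y2 + (-2*y0*y0)) * hax1 + ((-2*y7*y7) + (-2*y6*y6) + 4*y5*y7 + (-2*y5*y5) + 4*y4*y6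 + (-2*y4*y4) + 4*y3*y7 + (-4*y3*y5) + (-2*y3*y3) + 4*y2*y6 + (-4*y2*y4) + (-2*y2*y2) + (-4*y1*y7) + 4*y1*y5 + 4*y1*y3 + (-2*y1*y1) + (-4*y0*y6) + 4*y0*y4 + 4*y0*y2 + (-2*y0*y0)) * hax3 + (2 + 2*y7 + 2*y6 + 2*y5 + 4*y5*y7 + 2*y4 + 4*y4*y6 + (-2*y3) + (-4*y3*y5) + (-2*y2) + (-4*y2*y4) + (-2*y1) + (-4*y1*y7) + 4*y1*y3 + (-2*y0) + (-4*y0*y6) + 4*y0*y2) * hr4 + ((-2) + 2*u2*w + (-4*y7) + (-4*y7*y7) + (-4*y6) + (-4*y6*y7) + (-4*y6*y6) + (-4*y5) + (-4*y5*y6) + (-4*y5*y5) + (-4*y4) + (-4*y4*y7) + (-4*y4*y5) + (-4*y4*y4) + (-4*y3) + (-4*y3*y6) + (-8*y3*y5) + (-4*y3*y4) + (-4*y3*y3) + (-4*y2) + (-4*y2*y7) + (-4*y2*y5) + (-8*y2*y4) + (-4*y2*y3) + (-4*y2*y2) + (-4*y1) + (-8*y1*y7) + (-4*y1*y6) + (-4*y1*y4)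 + (-4*y1*y2) + (-4*y1*y1) + (-4*y0) + (-4*y0*y7) + (-8*y0*y6) + (-4*y0*y5) + (-4*y0*y3) + (-4*y0*y1) + (-4*y0*y0)) * hax0 + (2*u*e1 + 2*u*e0 + 2*u*n2 + (-2*u*n0) + 2*u*u2*e1 + 2*u*u2*e0 + 2*u*u2*n2 + (-2*u*u2*n0) + 2*u*y7*e1 + 2*u*y7*e0 + 2*u*y7*n2 + (-2*u*y7*n0) + 2*u*y6*e1 + 2*u*y6*e0 + 2*u*y6*n2 + (-2*u*y6*n0) + 2*u*y5*e1 + 2*u*y5*e0 + 2*u*y5*n2 + (-2*u*y5*n0) + 2*u*y4*e1 + 2*u*y4*e0 + 2*u*y4*n2 + (-2*u*y4*n0) + 2*u*y3*e1 + 2*u*y3*e0 + 2*u*y3*n2 + (-2*u*y3*n0) + 2*u*y2*e1 + 2*u*y2*e0 + 2*u*y2*n2 + (-2*u*y2*n0) + 2*u*y1*e1 + 2*u*y1*e0 + 2*u*y1*n2 + (-2*u*y1*n0) + 2*u*y0*e1 + 2*u*y0*e0 + 2*u*y0*n2 + (-2*u*y0*n0)) * hr5 + (2*v + (-2*u)) *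 hr7 + (2*u) * hr6 + (2*u*e1 + 2*u*e0 + 2*u*n2 + (-2*u*n0)) * hbu

/-- the Kharaghani-type product construction gives a symmetric difference
family of type `H_8^*` in `G × G'`. -/
theorem kharaghani_product_H8star {G G' : Type*}
    [AddCommGroup G] [Fintype G] [DecidableEq G]
    [AddCommGroup G'] [Fintype G'] [DecidableEq G']
    (D : Fin 4 → Finset G) (E₀ E₁ : Finset G)
    (hsym : ∀ i, IsSymmetric (D i)) (hH : IsTypeH D)
    (hE₀s : IsSymmetric E₀) (hE₁s : IsSymmetric E₁)
    (hE₀ : E₀ ⊆ Gstar G) (hE₁ : E₁ ⊆ Gstar G)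
    (h1 : grp (D 0) + grp (D 1) - grp (D 2) - grp (D 3) = grp E₀ - grp (Gstar G \ E₀))
    (h2 : grp (D 0) + grp (D 3) - grp (D 1) - grp (D 2) = grp E₁ - grp (Gstar G \ E₁))
    (h3 : IsTypeH4star ![E₀, E₁, Gstar G \ E₀, Gstar G \ E₁])
    (B : Fin 8 → Finset G') (hB : IsBuildingFamily B)
    (C : Fin 8 → Finset (G × G'))
    (hC : ∀ k, C k =
      (Finset.univ.biUnion fun j : Fin 8 =>
          ((![D 0, D 1, (D 2)ᶜ, (D 3)ᶜ, (D 0)ᶜ, (D 1)ᶜ, D 2, D 3]) j) ×ˢ B (bIdx k j))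
        ∪ ((![Gstar G \ E₀, Gstar G \ E₁, Gstar G \ E₀, Gstar G \ E₁, E₀, E₁, E₀, E₁]) k)
            ×ˢ ({0} : Finset G')) :
    (∀ k, IsSymmetric (C k)) ∧
      ∑ k, grp (C k) * grp (C k) =
        (4 * ((Fintype.card G : ℤ) * (Fintype.card G' : ℤ) - 1)) •
            AddMonoidAlgebra.single (0 : G × G') (1 : ℤ)
          + (2 * ((Fintype.card G : ℤ) * (Fintype.card G' : ℤ) - 3)) •
              grp (Gstar (G × G')) := by
  classical
  obtain ⟨hBsym, hBdisj, hBpart, hB4, hB8⟩ := hB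
  have hsymD : ∀ i, negSet (D i) = D i := fun i => hsym i
  have hE0eq : negSet E₀ = E₀ := hE₀s
  have hE1eq : negSet E₁ = E₁ := hE₁s
  have hsGE0 : negSet (Gstar G \ E₀) = Gstar G \ E₀ := kh_symm_sdiff kh_symm_Gstar hE₀s
  have hsGE1 : negSet (Gstar G \ E₁) = Gstar G \ E₁ := kh_symm_sdiff kh_symm_Gstar hE₁s
  have hBsub : ∀ j, B j ⊆ Gstar G' := by
    intro j
    rw [← hBpart]
    exact Finset.subset_biUnion_of_mem B (Finset.mem_univ j)
  have h0B : ∀ j, (0 : G') ∉ B j := by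
    intro j h
    have h' := hBsub j h
    simp [Gstar] at h'
  have hbinj : ∀ (k i j : Fin 8), i ≠ j → bIdx k i ≠ bIdx k j := by decide
  have hpd : ∀ k : Fin 8, ∀ i ∈ (Finset.univ : Finset (Fin 8)), ∀ j ∈ (Finset.univ : Finset (Fin 8)),
      i ≠ j → Disjoint (((![D 0, D 1, (D 2)ᶜ, (D 3)ᶜ, (D 0)ᶜ, (D 1)ᶜ, D 2, D 3]) i) ×ˢ B (bIdx k i)) (((![D 0, D 1, (D 2)ᶜ, (D 3)ᶜ, (D 0)ᶜ, (D 1)ᶜ, D 2, D 3]) j) ×ˢ B (bIdx k j)) := by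
    intro k i _ j _ hij
    exact kh_disjoint_prod (hBdisj _ _ (hbinj k i j hij))
  have hdU : ∀ k : Fin 8, Disjoint
      (Finset.univ.biUnion fun j : Fin 8 => ((![D 0, D 1, (D 2)ᶜ, (D 3)ᶜ, (D 0)ᶜ, (D 1)ᶜ, D 2, D 3]) j) ×ˢ B (bIdx k j))
      (((![Gstar G \ E₀, Gstar G \ E₁, Gstar G \ E₀, Gstar G \ E₁, E₀, E₁, E₀, E₁]) k) ×ˢ ({0} : Finset G')) := by
    intro k
    rw [Finset.disjoint_left]
    rintro ⟨a, b⟩ hab hab'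
    simp only [Finset.mem_biUnion, Finset.mem_product, Finset.mem_univ, true_and] at hab
    simp only [Finset.mem_product, Finset.mem_singleton] at hab'
    obtain ⟨j, hj⟩ := hab
    exact h0B (bIdx k j) (hab'.2 ▸ hj.2)
  have hCsym : ∀ k, IsSymmetric (C k) := by
    intro k
    rw [kh_isSymmetric_iff]
    intro a
    have hFA : ∀ (j : Fin 8) (x : G), -x ∈ (![D 0, D 1, (D 2)ᶜ, (D 3)ᶜ, (D 0)ᶜ, (D 1)ᶜ, D 2, D 3]) j ↔ x ∈ (![D 0, D 1, (D 2)ᶜ, (D 3)ᶜ, (D 0)ᶜ, (D 1)ᶜ, D 2, D 3]) j := by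
      intro j
      have hs : IsSymmetric ((![D 0, D 1, (D 2)ᶜ, (D 3)ᶜ, (D 0)ᶜ, (D 1)ᶜ, D 2, D 3]) j) := by
        fin_cases j
        · exact hsym 0
        · exact hsym 1
        · exact kh_symm_compl (hsym 2)
        · exact kh_symm_compl (hsym 3)
        · exact kh_symm_compl (hsym 0)
        · exact kh_symm_compl (hsym 1)
        · exact hsym 2
        · exact hsym 3
      exact kh_isSymmetric_iff.mp hs
    have hEA : ∀ (x : G), -x ∈ (![Gstar G \ E₀, Gstar G \ E₁, Gstar G \ E₀, Gstar G \ E₁, E₀, E₁, E₀, E₁]) k ↔ x ∈ (![Gstar G \ E₀, Gstar G \ E₁, Gstar G \ E₀, Gstar G \ E₁, E₀, E₁, E₀, E₁]) k := by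
      have hs : IsSymmetric ((![Gstar G \ E₀, Gstar G \ E₁, Gstar G \ E₀, Gstar G \ E₁, E₀, E₁, E₀, E₁]) k) := by
        fin_cases k
        · exact kh_symm_sdiff kh_symm_Gstar hE₀s
        · exact kh_symm_sdiff kh_symm_Gstar hE₁s
        · exact kh_symm_sdiff kh_symm_Gstar hE₀s
        · exact kh_symm_sdiff kh_symm_Gstar hE₁s
        · exact hE₀s
        · exact hE₁s
        · exact hE₀s
        · exact hE₁s
      exact kh_isSymmetric_iff.mp hs
    have hBA : ∀ (j : Fin 8) (x : G'), -x ∈ B j ↔ x ∈ B j := fun j => kh_isSymmetric_iff.mp (hBsym j)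
    rw [hC k]
    simp only [Finset.mem_union, Finset.mem_biUnion, Finset.mem_product, Finset.mem_univ,
      true_and, Finset.mem_singleton, Prod.fst_neg, Prod.snd_neg, neg_eq_zero, hFA, hEA, hBA]
  refine ⟨hCsym, ?_⟩
  -- ℤ[G]-level relations
  have hHZ := hH
  unfold IsTypeH at hHZ
  simp only [Fin.sum_univ_four, hsymD, ← AddMonoidAlgebra.one_def, zsmul_eq_mul] at hHZ
  have hr1 : embL G G' (grp (D 0))*embL G G' (grp (D 0)) + embL G G' (grp (D 1))*embL G G' (grp (D 1)) + embL G G' (grp (D 2))*embL G G' (grp (D 2)) + embL G G' (grp (D 3))*embL G G' (grp (D 3)) = (((D 0).card : AddMonoidAlgebra ℤ (G × G'))+((D 1).card : AddMonoidAlgebra ℤ (G × G'))+((D 2).card : AddMonoidAlgebra ℤ (G × G'))+((D 3).card : AddMonoidAlgebra ℤ (G × G'))-(Fintype.card G : AddMonoidAlgebra ℤ (G × G')))*embL G G' (grp (Finset.univ : Finset G)) + (Fintype.card G : AddMonoidAlgebra ℤ (G × G')) := by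
    have h' := congrArg (embL G G') hHZ
    simp only [map_add, map_sub, map_mul, map_one, map_intCast] at h'
    push_cast at h' ⊢
    linear_combination h'
  have h1Z := h1
  rw [kh_grp_sdiff hE₀, kh_grp_Gstar] at h1Z
  have hr2 : embL G G' (grp (D 0))+embL G G' (grp (D 1))-embL G G' (grp (D 2))-embL G G' (grp (D 3)) = 2*embL G G' (grp (E₀)) - embL G G' (grp (Finset.univ : Finset G)) + 1 := by
    have h' := congrArg (embL G G') h1Z
    simp only [map_add, map_sub, map_mul, map_one] at h'
    linear_combination h'
  have h2Z := h2
  rw [kh_grp_sdiff hE₁, kh_grp_Gstar] at h2Z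
  have hr3 : embL G G' (grp (D 0))+embL G G' (grp (D 3))-embL G G' (grp (D 1))-embL G G' (grp (D 2)) = 2*embL G G' (grp (E₁)) - embL G G' (grp (Finset.univ : Finset G)) + 1 := by
    have h' := congrArg (embL G G') h2Z
    simp only [map_add, map_sub, map_mul, map_one] at h'
    linear_combination h'
  have hc2 : ((Gstar G \ E₀).card : ℤ) = (Fintype.card G : ℤ) - 1 - (E₀.card : ℤ) := by
    have h1' : E₀.card ≤ (Gstar G).card := Finset.card_le_card hE₀
    have h2' : 1 ≤ Fintype.card G := Fintype.card_pos
    rw [Finset.card_sdiff_of_subset hE₀, kh_card_Gstar]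
    rw [kh_card_Gstar] at h1'
    omega
  have hc3 : ((Gstar G \ E₁).card : ℤ) = (Fintype.card G : ℤ) - 1 - (E₁.card : ℤ) := by
    have h1' : E₁.card ≤ (Gstar G).card := Finset.card_le_card hE₁
    have h2' : 1 ≤ Fintype.card G := Fintype.card_pos
    rw [Finset.card_sdiff_of_subset hE₁, kh_card_Gstar]
    rw [kh_card_Gstar] at h1'
    omega
  have h3Z := h3
  unfold IsTypeH4star at h3Z
  simp only [Fin.sum_univ_four] at h3Z
  simp only [(show (![E₀, E₁, Gstar G \ E₀, Gstar G \ E₁] : Fin 4 → Finset G) 0 = E₀ from rfl), (show (![E₀, E₁, Gstar G \ E₀, Gstar G \ E₁] : Fin 4 → Finset G) 1 = E₁ from rfl), (show (![E₀, E₁, Gstar G \ E₀, Gstar G \ E₁] : Fin 4 → Finset G) 2 = Gstar G \ E₀ from rfl), (show (![E₀, E₁, Gstar G \ E₀, Gstar G \ E₁] : Fin 4 → Finset G) 3 = Gstar G \ E₁ from rfl)] at h3Z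
  simp only [hE0eq, hE1eq, hsGE0, hsGE1, ← AddMonoidAlgebra.one_def] at h3Z
  rw [hc2, hc3] at h3Z
  simp only [kh_grp_sdiff hE₀, kh_grp_sdiff hE₁, kh_grp_Gstar, zsmul_eq_mul] at h3Z
  have hr4 : embL G G' (grp (E₀))*embL G G' (grp (E₀)) + embL G G' (grp (E₁))*embL G G' (grp (E₁)) + (embL G G' (grp (Finset.univ : Finset G))-1-embL G G' (grp (E₀)))*(embL G G' (grp (Finset.univ : Finset G))-1-embL G G' (grp (E₀))) + (embL G G' (grp (Finset.univ : Finset G))-1-embL G G' (grp (E₁)))*(embL G G' (grp (Finset.univ : Finset G))-1-embL G G' (grp (E₁))) = ((Fintype.card G : AddMonoidAlgebra ℤ (G × G'))-3)*embL G G' (grp (Finset.univ : Finset G)) + ((Fintype.card G : AddMonoidAlgebra ℤ (G × G'))+1) := by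
    have h' := congrArg (embL G G') h3Z
    simp only [map_add, map_sub, map_mul, map_one, map_intCast] at h'
    push_cast at h' ⊢
    linear_combination h'
  have h5Z := congrArg grp hBpart
  rw [kh_grp_biUnion (fun i _ j _ hij => hBdisj i j hij), Fin.sum_univ_eight, kh_grp_Gstar] at h5Z
  have hr5 : embR G G' (grp (B 0))+embR G G' (grp (B 1))+embR G G' (grp (B 2))+embR G G' (grp (B 3))+embR G G' (grp (B 4))+embR G G' (grp (B 5))+embR G G' (grp (B 6))+embR G G' (grp (B 7)) = embR G G' (grp (Finset.univ : Finset G')) - 1 := by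
    have h' := congrArg (embR G G') h5Z
    simp only [map_add, map_sub, map_one] at h'
    linear_combination h'
  have d1a : Disjoint (B 0 ∪ B 1) (B 6) := by
    rw [Finset.disjoint_union_left]
    exact ⟨hBdisj 0 6 (by decide), hBdisj 1 6 (by decide)⟩
  have d1b : Disjoint (B 0 ∪ B 1 ∪ B 6) (B 7) := by
    rw [Finset.disjoint_union_left, Finset.disjoint_union_left]
    exact ⟨⟨hBdisj 0 7 (by decide), hBdisj 1 7 (by decide)⟩, hBdisj 6 7 (by decide)⟩
  have hg1 : grp (B 0 ∪ B 1 ∪ B 6 ∪ B 7) = grp (B 0) + grp (B 1) + grp (B 6) + grp (B 7) := by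
    rw [kh_grp_union d1b, kh_grp_union d1a, kh_grp_union (hBdisj 0 1 (by decide))]
  have hcb1 : (B 0 ∪ B 1 ∪ B 6 ∪ B 7).card = (B 0).card + (B 1).card + (B 6).card + (B 7).card := by
    rw [Finset.card_union_of_disjoint d1b, Finset.card_union_of_disjoint d1a,
      Finset.card_union_of_disjoint (hBdisj 0 1 (by decide))]
  have d2a : Disjoint (B 2 ∪ B 3) (B 4) := by
    rw [Finset.disjoint_union_left]
    exact ⟨hBdisj 2 4 (by decide), hBdisj 3 4 (by decide)⟩
  have d2b : Disjoint (B 2 ∪ B 3 ∪ B 4) (B 5) := by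
    rw [Finset.disjoint_union_left, Finset.disjoint_union_left]
    exact ⟨⟨hBdisj 2 5 (by decide), hBdisj 3 5 (by decide)⟩, hBdisj 4 5 (by decide)⟩
  have hg2 : grp (B 2 ∪ B 3 ∪ B 4 ∪ B 5) = grp (B 2) + grp (B 3) + grp (B 4) + grp (B 5) := by
    rw [kh_grp_union d2b, kh_grp_union d2a, kh_grp_union (hBdisj 2 3 (by decide))]
  have hcb2 : (B 2 ∪ B 3 ∪ B 4 ∪ B 5).card = (B 2).card + (B 3).card + (B 4).card + (B 5).card := by
    rw [Finset.card_union_of_disjoint d2b, Finset.card_union_of_disjoint d2a,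
      Finset.card_union_of_disjoint (hBdisj 2 3 (by decide))]
  have d3a : Disjoint (B 0 ∪ B 3) (B 5) := by
    rw [Finset.disjoint_union_left]
    exact ⟨hBdisj 0 5 (by decide), hBdisj 3 5 (by decide)⟩
  have d3b : Disjoint (B 0 ∪ B 3 ∪ B 5) (B 6) := by
    rw [Finset.disjoint_union_left, Finset.disjoint_union_left]
    exact ⟨⟨hBdisj 0 6 (by decide), hBdisj 3 6 (by decide)⟩, hBdisj 5 6 (by decide)⟩
  have hg3 : grp (B 0 ∪ B 3 ∪ B 5 ∪ B 6) = grp (B 0) + grp (B 3) + grp (B 5) + grp (B 6) := by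
    rw [kh_grp_union d3b, kh_grp_union d3a, kh_grp_union (hBdisj 0 3 (by decide))]
  have hcb3 : (B 0 ∪ B 3 ∪ B 5 ∪ B 6).card = (B 0).card + (B 3).card + (B 5).card + (B 6).card := by
    rw [Finset.card_union_of_disjoint d3b, Finset.card_union_of_disjoint d3a,
      Finset.card_union_of_disjoint (hBdisj 0 3 (by decide))]
  have d4a : Disjoint (B 1 ∪ B 2) (B 4) := by
    rw [Finset.disjoint_union_left]
    exact ⟨hBdisj 1 4 (by decide), hBdisj 2 4 (by decide)⟩
  have d4b : Disjoint (B 1 ∪ B 2 ∪ B 4) (B 7) := by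
    rw [Finset.disjoint_union_left, Finset.disjoint_union_left]
    exact ⟨⟨hBdisj 1 7 (by decide), hBdisj 2 7 (by decide)⟩, hBdisj 4 7 (by decide)⟩
  have hg4 : grp (B 1 ∪ B 2 ∪ B 4 ∪ B 7) = grp (B 1) + grp (B 2) + grp (B 4) + grp (B 7) := by
    rw [kh_grp_union d4b, kh_grp_union d4a, kh_grp_union (hBdisj 1 2 (by decide))]
  have hcb4 : (B 1 ∪ B 2 ∪ B 4 ∪ B 7).card = (B 1).card + (B 2).card + (B 4).card + (B 7).card := by
    rw [Finset.card_union_of_disjoint d4b, Finset.card_union_of_disjoint d4a,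
      Finset.card_union_of_disjoint (hBdisj 1 2 (by decide))]
  have hsU1 : negSet (B 0 ∪ B 1 ∪ B 6 ∪ B 7) = B 0 ∪ B 1 ∪ B 6 ∪ B 7 :=
    kh_symm_union (kh_symm_union (kh_symm_union (hBsym 0) (hBsym 1)) (hBsym 6)) (hBsym 7)
  have hsU2 : negSet (B 2 ∪ B 3 ∪ B 4 ∪ B 5) = B 2 ∪ B 3 ∪ B 4 ∪ B 5 :=
    kh_symm_union (kh_symm_union (kh_symm_union (hBsym 2) (hBsym 3)) (hBsym 4)) (hBsym 5)
  have hsU3 : negSet (B 0 ∪ B 3 ∪ B 5 ∪ B 6) = B 0 ∪ B 3 ∪ B 5 ∪ B 6 :=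
    kh_symm_union (kh_symm_union (kh_symm_union (hBsym 0) (hBsym 3)) (hBsym 5)) (hBsym 6)
  have hsU4 : negSet (B 1 ∪ B 2 ∪ B 4 ∪ B 7) = B 1 ∪ B 2 ∪ B 4 ∪ B 7 :=
    kh_symm_union (kh_symm_union (kh_symm_union (hBsym 1) (hBsym 2)) (hBsym 4)) (hBsym 7)
  have hcAll : (B 0).card + (B 1).card + (B 2).card + (B 3).card + (B 4).card + (B 5).card
      + (B 6).card + (B 7).card = Fintype.card G' - 1 := by
    have h' := congrArg Finset.card hBpart
    rw [Finset.card_biUnion (fun i _ j _ hij => hBdisj i j hij), Fin.sum_univ_eight,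
      kh_card_Gstar] at h'
    exact h'
  have hcAllR : ((B 0).card : AddMonoidAlgebra ℤ (G × G')) + ((B 1).card : AddMonoidAlgebra ℤ (G × G')) + ((B 2).card : AddMonoidAlgebra ℤ (G × G')) + ((B 3).card : AddMonoidAlgebra ℤ (G × G'))
      + ((B 4).card : AddMonoidAlgebra ℤ (G × G')) + ((B 5).card : AddMonoidAlgebra ℤ (G × G')) + ((B 6).card : AddMonoidAlgebra ℤ (G × G')) + ((B 7).card : AddMonoidAlgebra ℤ (G × G'))
      = (Fintype.card G' : AddMonoidAlgebra ℤ (G × G')) - 1 := by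
    have h2' : 1 ≤ Fintype.card G' := Fintype.card_pos
    have hz : ((B 0).card : ℤ) + ((B 1).card : ℤ) + ((B 2).card : ℤ) + ((B 3).card : ℤ)
        + ((B 4).card : ℤ) + ((B 5).card : ℤ) + ((B 6).card : ℤ) + ((B 7).card : ℤ)
        = (Fintype.card G' : ℤ) - 1 := by omega
    have h' := congrArg (Int.cast : ℤ → AddMonoidAlgebra ℤ (G × G')) hz
    push_cast at h' ⊢
    linear_combination h'
  have h6Z := hB4
  unfold IsTypeH4star at h6Z
  simp only [Fin.sum_univ_four] at h6Z
  simp only [(show (![B 0 ∪ B 1 ∪ B 6 ∪ B 7, B 2 ∪ B 3 ∪ B 4 ∪ B 5, B 0 ∪ B 3 ∪ B 5 ∪ B 6, B 1 ∪ B 2 ∪ B 4 ∪ B 7] : Fin 4 → Finset G') 0 = B 0 ∪ B 1 ∪ B 6 ∪ B 7 from rfl), (show (![B 0 ∪ B 1 ∪ B 6 ∪ B 7, B 2 ∪ B 3 ∪ B 4 ∪ B 5, B 0 ∪ B 3 ∪ B 5 ∪ B 6, B 1 ∪ B 2 ∪ B 4 ∪ B 7] : Fin 4 → Finset G') 1 =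 B 2 ∪ B 3 ∪ B 4 ∪ B 5 from rfl), (show (![B 0 ∪ B 1 ∪ B 6 ∪ B 7, B 2 ∪ B 3 ∪ B 4 ∪ B 5, B 0 ∪ B 3 ∪ B 5 ∪ B 6, B 1 ∪ B 2 ∪ B 4 ∪ B 7] : Fin 4 → Finset G') 2 = B 0 ∪ B 3 ∪ B 5 ∪ B 6 from rfl), (show (![B 0 ∪ B 1 ∪ B 6 ∪ B 7, B 2 ∪ B 3 ∪ B 4 ∪ B 5, B 0 ∪ B 3 ∪ B 5 ∪ B 6, B 1 ∪ B 2 ∪ B 4 ∪ B 7] : Fin 4 → Finset G') 3 = B 1 ∪ B 2 ∪ B 4 ∪ B 7 from rfl)] at h6Z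
  simp only [hsU1, hsU2, hsU3, hsU4, ← AddMonoidAlgebra.one_def] at h6Z
  rw [hcb1, hcb2, hcb3, hcb4] at h6Z
  simp only [hg1, hg2, hg3, hg4, zsmul_eq_mul] at h6Z
  have hr6 : (embR G G' (grp (B 0))+embR G G' (grp (B 1))+embR G G' (grp (B 6))+embR G G' (grp (B 7)))*(embR G G' (grp (B 0))+embR G G' (grp (B 1))+embR G G' (grp (B 6))+embR G G' (grp (B 7))) + (embR G G' (grp (B 2))+embR G G' (grp (B 3))+embR G G' (grp (B 4))+embR G G' (grp (B 5)))*(embR G G' (grp (B 2))+embR G G' (grp (B 3))+embR G G' (grp (B 4))+embR G G' (grp (B 5))) + (embR G G' (grp (B 0))+embR G G' (grp (B 3))+embR G G' (grp (B 5))+embR G G' (grp (B 6)))*(embR G G' (grp (B 0))+embR G G' (grp (B 3))+embR G G' (grp (B 5))+embR G G' (grp (B 6))) + (embR G G' (grp (B 1))+embR G G' (grp (B 2))+embR G G' (grp (B 4))+embR G G' (grp (B 7)))*(embR G G' (grp (B 1))+embR G G' (grp (B 2))+embR G G' (grp (B 4))+embR G G' (grp (B 7))) = ((Fintype.card G' :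 AddMonoidAlgebra ℤ (G × G'))-3)*embR G G' (grp (Finset.univ : Finset G')) + ((Fintype.card G' : AddMonoidAlgebra ℤ (G × G'))+1) := by
    have h' := congrArg (embR G G') h6Z
    simp only [map_add, map_sub, map_mul, map_one, map_intCast] at h'
    push_cast at h' ⊢
    linear_combination h' + 2 * (embR G G' (grp (Finset.univ : Finset G'))) * hcAllR
  have h8Z := hB8
  simp only [Fin.sum_univ_eight] at h8Z
  simp only [(show ((0:Fin 8) + 4) = (4:Fin 8) from rfl), (show ((1:Fin 8) + 4) = (5:Fin 8) from rfl), (show ((2:Fin 8) + 4) = (6:Fin 8) from rfl), (show ((3:Fin 8) + 4) = (7:Fin 8) from rfl), (show ((4:Fin 8) + 4) = (0:Fin 8) from rfl), (show ((5:Fin 8) + 4) = (1:Fin 8) from rfl), (show ((6:Fin 8) + 4) = (2:Fin 8) from rfl), (show ((7:Fin 8) + 4) = (3:Fin 8) from rfl), ← AddMonoidAlgebra.one_def, zsmul_eq_mul] at h8Z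
  have hr7 : (embR G G' (grp (B 0))*embR G G' (grp (B 0))+embR G G' (grp (B 1))*embR G G' (grp (B 1))+embR G G' (grp (B 2))*embR G G' (grp (B 2))+embR G G' (grp (B 3))*embR G G' (grp (B 3))+embR G G' (grp (B 4))*embR G G' (grp (B 4))+embR G G' (grp (B 5))*embR G G' (grp (B 5))+embR G G' (grp (B 6))*embR G G' (grp (B 6))+embR G G' (grp (B 7))*embR G G' (grp (B 7))) - (embR G G' (grp (B 0))*embR G G' (grp (B 4))+embR G G' (grp (B 1))*embR G G' (grp (B 5))+embR G G' (grp (B 2))*embR G G' (grp (B 6))+embR G G' (grp (B 3))*embR G G' (grp (B 7))+embR G G' (grp (B 4))*embR G G' (grp (B 0))+embR G G' (grp (B 5))*embR G G' (grp (B 1))+embR G G' (grp (B 6))*embR G G' (grp (B 2))+embR G G' (grp (B 7))*embR G G' (grp (B 3))) = ((Fintype.card G' : AddMonoidAlgebra ℤ (G × G'))-1) + ((embR G G' (grp (B 0))+embR G G' (grp (B 1))+embR G G' (grp (B 2))+embR G G' (grp (B 3))) - (embR G G' (grp (B 4))+embR G G' (grp (B 5))+embR G G' (grp (B 6))+embR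 G G' (grp (B 7)))) := by
    have h' := congrArg (embR G G') h8Z
    simp only [map_add, map_sub, map_mul, map_one, map_intCast] at h'
    push_cast at h' ⊢
    linear_combination h'
  have hauZ := kh_grp_univ_absorb (Finset.univ : Finset G)
  rw [Finset.card_univ, zsmul_eq_mul] at hauZ
  have hau : embL G G' (grp (Finset.univ : Finset G))*embL G G' (grp (Finset.univ : Finset G)) = (Fintype.card G : AddMonoidAlgebra ℤ (G × G'))*embL G G' (grp (Finset.univ : Finset G)) := by
    have h' := congrArg (embL G G') hauZ
    simp only [map_mul, map_intCast] at h'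
    push_cast at h' ⊢
    linear_combination h'
  have hax0 : embL G G' (grp (Finset.univ : Finset G))*embL G G' (grp (D 0)) = ((D 0).card : AddMonoidAlgebra ℤ (G × G'))*embL G G' (grp (Finset.univ : Finset G)) := by
    have h'' := kh_grp_univ_absorb (D 0)
    rw [zsmul_eq_mul] at h''
    have h' := congrArg (embL G G') h''
    simp only [map_mul, map_intCast] at h'
    push_cast at h' ⊢
    linear_combination h'
  have hax1 : embL G G' (grp (Finset.univ : Finset G))*embL G G' (grp (D 1)) = ((D 1).card : AddMonoidAlgebra ℤ (G × G'))*embL G G' (grp (Finset.univ : Finset G)) := by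
    have h'' := kh_grp_univ_absorb (D 1)
    rw [zsmul_eq_mul] at h''
    have h' := congrArg (embL G G') h''
    simp only [map_mul, map_intCast] at h'
    push_cast at h' ⊢
    linear_combination h'
  have hax2 : embL G G' (grp (Finset.univ : Finset G))*embL G G' (grp (D 2)) = ((D 2).card : AddMonoidAlgebra ℤ (G × G'))*embL G G' (grp (Finset.univ : Finset G)) := by
    have h'' := kh_grp_univ_absorb (D 2)
    rw [zsmul_eq_mul] at h''
    have h' := congrArg (embL G G') h''
    simp only [map_mul, map_intCast] at h'
    push_cast at h' ⊢
    linear_combination h'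
  have hax3 : embL G G' (grp (Finset.univ : Finset G))*embL G G' (grp (D 3)) = ((D 3).card : AddMonoidAlgebra ℤ (G × G'))*embL G G' (grp (Finset.univ : Finset G)) := by
    have h'' := kh_grp_univ_absorb (D 3)
    rw [zsmul_eq_mul] at h''
    have h' := congrArg (embL G G') h''
    simp only [map_mul, map_intCast] at h'
    push_cast at h' ⊢
    linear_combination h'
  have hap : embL G G' (grp (Finset.univ : Finset G))*embL G G' (grp (E₀)) = (E₀.card : AddMonoidAlgebra ℤ (G × G'))*embL G G' (grp (Finset.univ : Finset G)) := by
    have h'' := kh_grp_univ_absorb E₀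
    rw [zsmul_eq_mul] at h''
    have h' := congrArg (embL G G') h''
    simp only [map_mul, map_intCast] at h'
    push_cast at h' ⊢
    linear_combination h'
  have haq : embL G G' (grp (Finset.univ : Finset G))*embL G G' (grp (E₁)) = (E₁.card : AddMonoidAlgebra ℤ (G × G'))*embL G G' (grp (Finset.univ : Finset G)) := by
    have h'' := kh_grp_univ_absorb E₁
    rw [zsmul_eq_mul] at h''
    have h' := congrArg (embL G G') h''
    simp only [map_mul, map_intCast] at h'
    push_cast at h' ⊢
    linear_combination h'
  have hbu : embR G G' (grp (Finset.univ : Finset G'))*embR G G' (grp (Finset.univ : Finset G')) = (Fintype.card G' : AddMonoidAlgebra ℤ (G × G'))*embR G G' (grp (Finset.univ : Finset G')) := by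
    have h'' := kh_grp_univ_absorb (Finset.univ : Finset G')
    rw [Finset.card_univ, zsmul_eq_mul] at h''
    have h' := congrArg (embR G G') h''
    simp only [map_mul, map_intCast] at h'
    push_cast at h' ⊢
    linear_combination h'
  have hgC0 : grp (C 0) = embL G G' (grp (D 0)) * embR G G' (grp (B 0)) + embL G G' (grp (D 1)) * embR G G' (grp (B 1)) + (embL G G' (grp (Finset.univ : Finset G)) - embL G G' (grp (D 2))) * embR G G' (grp (B 2)) + (embL G G' (grp (Finset.univ : Finset G)) - embL G G' (grp (D 3))) * embR G G' (grp (B 3)) + (embL G G' (grp (Finset.univ : Finset G)) - embL G G' (grp (D 0))) * embR G G' (grp (B 4)) + (embL G G' (grp (Finset.univ : Finset G)) - embL G G' (grp (D 1))) * embR G G' (grp (B 5)) + embL G G' (grp (D 2)) * embR G G' (grp (B 6)) + embL G G' (grp (D 3)) * embR G G' (grp (B 7)) + (embL G G' (grp (Finset.univ : Finset G)) - 1 - embL G G' (grp (E₀))) := by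
    rw [hC 0, kh_grp_union (hdU 0), kh_grp_biUnion (hpd 0), Fin.sum_univ_eight]
    simp only [kh_grp_prod, kh_grp_singleton_zero, map_one, mul_one]
    simp only [(show (![D 0, D 1, (D 2)ᶜ, (D 3)ᶜ, (D 0)ᶜ, (D 1)ᶜ, D 2, D 3] : Fin 8 → Finset G) 0 = D 0 from rfl), (show (![D 0, D 1, (D 2)ᶜ, (D 3)ᶜ, (D 0)ᶜ, (D 1)ᶜ, D 2, D 3] : Fin 8 → Finset G) 1 = D 1 from rfl), (show (![D 0, D 1, (D 2)ᶜ, (D 3)ᶜ, (D 0)ᶜ, (D 1)ᶜ, D 2, D 3] : Fin 8 → Finset G) 2 = (D 2)ᶜ from rfl), (show (![D 0, D 1, (D 2)ᶜ, (D 3)ᶜ, (D 0)ᶜ, (D 1)ᶜ, D 2, D 3] : Fin 8 → Finset G) 3 = (D 3)ᶜ from rfl), (show (![D 0, D 1, (D 2)ᶜ, (D 3)ᶜ, (D 0)ᶜ, (D 1)ᶜ, D 2, D 3] : Fin 8 → Finset G) 4 = (D 0)ᶜ from rfl), (show (![D 0, D 1, (D 2)ᶜ, (D 3)ᶜ, (D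 0)ᶜ, (D 1)ᶜ, D 2, D 3] : Fin 8 → Finset G) 5 = (D 1)ᶜ from rfl), (show (![D 0, D 1, (D 2)ᶜ, (D 3)ᶜ, (D 0)ᶜ, (D 1)ᶜ, D 2, D 3] : Fin 8 → Finset G) 6 = D 2 from rfl), (show (![D 0, D 1, (D 2)ᶜ, (D 3)ᶜ, (D 0)ᶜ, (D 1)ᶜ, D 2, D 3] : Fin 8 → Finset G) 7 = D 3 from rfl), (show (![Gstar G \ E₀, Gstar G \ E₁, Gstar G \ E₀, Gstar G \ E₁, E₀, E₁, E₀, E₁] : Fin 8 → Finset G) 0 = Gstar G \ E₀ from rfl), (show bIdx 0 0 = 0 from rfl), (show bIdx 0 1 = 1 from rfl), (show bIdx 0 2 = 2 from rfl), (show bIdx 0 3 = 3 from rfl), (show bIdx 0 4 = 4 from rfl), (show bIdx 0 5 = 5 from rfl), (show bIdx 0 6 = 6 from rfl), (show bIdx 0 7 = 7 from rfl)]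
    simp only [kh_grp_compl, kh_grp_sdiff hE₀, kh_grp_sdiff hE₁, kh_grp_Gstar, map_sub, map_one]
  have hgC1 : grp (C 1) = embL G G' (grp (D 0)) * embR G G' (grp (B 1)) + embL G G' (grp (D 1)) * embR G G' (grp (B 4)) + (embL G G' (grp (Finset.univ : Finset G)) - embL G G' (grp (D 2))) * embR G G' (grp (B 3)) + (embL G G' (grp (Finset.univ : Finset G)) - embL G G' (grp (D 3))) * embR G G' (grp (B 6)) + (embL G G' (grp (Finset.univ : Finset G)) - embL G G' (grp (D 0))) * embR G G' (grp (B 5)) + (embL G G' (grp (Finset.univ : Finset G)) - embL G G' (grp (D 1))) * embR G G' (grp (B 0)) + embL G G' (grp (D 2)) * embR G G' (grp (B 7)) + embL G G' (grp (D 3)) * embR G G' (grp (B 2)) + (embL G G' (grp (Finset.univ : Finset G)) - 1 - embL G G' (grp (E₁))) := by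
    rw [hC 1, kh_grp_union (hdU 1), kh_grp_biUnion (hpd 1), Fin.sum_univ_eight]
    simp only [kh_grp_prod, kh_grp_singleton_zero, map_one, mul_one]
    simp only [(show (![D 0, D 1, (D 2)ᶜ, (D 3)ᶜ, (D 0)ᶜ, (D 1)ᶜ, D 2, D 3] : Fin 8 → Finset G) 0 = D 0 from rfl), (show (![D 0, D 1, (D 2)ᶜ, (D 3)ᶜ, (D 0)ᶜ, (D 1)ᶜ, D 2, D 3] : Fin 8 → Finset G) 1 = D 1 from rfl), (show (![D 0, D 1, (D 2)ᶜ, (D 3)ᶜ, (D 0)ᶜ, (D 1)ᶜ, D 2, D 3] : Fin 8 → Finset G) 2 = (D 2)ᶜ from rfl), (show (![D 0, D 1, (D 2)ᶜ, (D 3)ᶜ, (D 0)ᶜ, (D 1)ᶜ, D 2, D 3] : Fin 8 → Finset G) 3 = (D 3)ᶜ from rfl), (show (![D 0, D 1, (D 2)ᶜ, (D 3)ᶜ, (D 0)ᶜ, (D 1)ᶜ, D 2, D 3] : Fin 8 → Finset G) 4 = (D 0)ᶜ from rfl), (show (![D 0, D 1, (D 2)ᶜ, (D 3)ᶜ, (D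 0)ᶜ, (D 1)ᶜ, D 2, D 3] : Fin 8 → Finset G) 5 = (D 1)ᶜ from rfl), (show (![D 0, D 1, (D 2)ᶜ, (D 3)ᶜ, (D 0)ᶜ, (D 1)ᶜ, D 2, D 3] : Fin 8 → Finset G) 6 = D 2 from rfl), (show (![D 0, D 1, (D 2)ᶜ, (D 3)ᶜ, (D 0)ᶜ, (D 1)ᶜ, D 2, D 3] : Fin 8 → Finset G) 7 = D 3 from rfl), (show (![Gstar G \ E₀, Gstar G \ E₁, Gstar G \ E₀, Gstar G \ E₁, E₀, E₁, E₀, E₁] : Fin 8 → Finset G) 1 = Gstar G \ E₁ from rfl), (show bIdx 1 0 = 1 from rfl), (show bIdx 1 1 = 4 from rfl), (show bIdx 1 2 = 3 from rfl), (show bIdx 1 3 = 6 from rfl), (show bIdx 1 4 = 5 from rfl), (show bIdx 1 5 = 0 from rfl), (show bIdx 1 6 = 7 from rfl), (show bIdx 1 7 = 2 from rfl)]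
    simp only [kh_grp_compl, kh_grp_sdiff hE₀, kh_grp_sdiff hE₁, kh_grp_Gstar, map_sub, map_one]
  have hgC2 : grp (C 2) = embL G G' (grp (D 0)) * embR G G' (grp (B 2)) + embL G G' (grp (D 1)) * embR G G' (grp (B 3)) + (embL G G' (grp (Finset.univ : Finset G)) - embL G G' (grp (D 2))) * embR G G' (grp (B 0)) + (embL G G' (grp (Finset.univ : Finset G)) - embL G G' (grp (D 3))) * embR G G' (grp (B 1)) + (embL G G' (grp (Finset.univ : Finset G)) - embL G G' (grp (D 0))) * embR G G' (grp (B 6)) + (embL G G' (grp (Finset.univ : Finset G)) - embL G G' (grp (D 1))) * embR G G' (grp (B 7)) + embL G G' (grp (D 2)) * embR G G' (grp (B 4)) + embL G G' (grp (D 3)) * embR G G' (grp (B 5)) + (embL G G' (grp (Finset.univ : Finset G)) - 1 - embL G G' (grp (E₀))) := by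
    rw [hC 2, kh_grp_union (hdU 2), kh_grp_biUnion (hpd 2), Fin.sum_univ_eight]
    simp only [kh_grp_prod, kh_grp_singleton_zero, map_one, mul_one]
    simp only [(show (![D 0, D 1, (D 2)ᶜ, (D 3)ᶜ, (D 0)ᶜ, (D 1)ᶜ, D 2, D 3] : Fin 8 → Finset G) 0 = D 0 from rfl), (show (![D 0, D 1, (D 2)ᶜ, (D 3)ᶜ, (D 0)ᶜ, (D 1)ᶜ, D 2, D 3] : Fin 8 → Finset G) 1 = D 1 from rfl), (show (![D 0, D 1, (D 2)ᶜ, (D 3)ᶜ, (D 0)ᶜ, (D 1)ᶜ, D 2, D 3] : Fin 8 → Finset G) 2 = (D 2)ᶜ from rfl), (show (![D 0, D 1, (D 2)ᶜ, (D 3)ᶜ, (D 0)ᶜ, (D 1)ᶜ, D 2, D 3] : Fin 8 → Finset G) 3 = (D 3)ᶜ from rfl), (show (![D 0, D 1, (D 2)ᶜ, (D 3)ᶜ, (D 0)ᶜ, (D 1)ᶜ, D 2, D 3] : Fin 8 → Finset G) 4 = (D 0)ᶜ from rfl), (show (![D 0, D 1, (D 2)ᶜ, (D 3)ᶜ, (D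 0)ᶜ, (D 1)ᶜ, D 2, D 3] : Fin 8 → Finset G) 5 = (D 1)ᶜ from rfl), (show (![D 0, D 1, (D 2)ᶜ, (D 3)ᶜ, (D 0)ᶜ, (D 1)ᶜ, D 2, D 3] : Fin 8 → Finset G) 6 = D 2 from rfl), (show (![D 0, D 1, (D 2)ᶜ, (D 3)ᶜ, (D 0)ᶜ, (D 1)ᶜ, D 2, D 3] : Fin 8 → Finset G) 7 = D 3 from rfl), (show (![Gstar G \ E₀, Gstar G \ E₁, Gstar G \ E₀, Gstar G \ E₁, E₀, E₁, E₀, E₁] : Fin 8 → Finset G) 2 = Gstar G \ E₀ from rfl), (show bIdx 2 0 = 2 from rfl), (show bIdx 2 1 = 3 from rfl), (show bIdx 2 2 = 0 from rfl), (show bIdx 2 3 = 1 from rfl), (show bIdx 2 4 = 6 from rfl), (show bIdx 2 5 = 7 from rfl), (show bIdx 2 6 = 4 from rfl), (show bIdx 2 7 = 5 from rfl)]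
    simp only [kh_grp_compl, kh_grp_sdiff hE₀, kh_grp_sdiff hE₁, kh_grp_Gstar, map_sub, map_one]
  have hgC3 : grp (C 3) = embL G G' (grp (D 0)) * embR G G' (grp (B 3)) + embL G G' (grp (D 1)) * embR G G' (grp (B 6)) + (embL G G' (grp (Finset.univ : Finset G)) - embL G G' (grp (D 2))) * embR G G' (grp (B 1)) + (embL G G' (grp (Finset.univ : Finset G)) - embL G G' (grp (D 3))) * embR G G' (grp (B 4)) + (embL G G' (grp (Finset.univ : Finset G)) - embL G G' (grp (D 0))) * embR G G' (grp (B 7)) + (embL G G' (grp (Finset.univ : Finset G)) - embL G G' (grp (D 1))) * embR G G' (grp (B 2)) + embL G G' (grp (D 2)) * embR G G' (grp (B 5)) + embL G G' (grp (D 3)) * embR G G' (grp (B 0)) + (embL G G' (grp (Finset.univ : Finset G)) - 1 - embL G G' (grp (E₁))) := by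
    rw [hC 3, kh_grp_union (hdU 3), kh_grp_biUnion (hpd 3), Fin.sum_univ_eight]
    simp only [kh_grp_prod, kh_grp_singleton_zero, map_one, mul_one]
    simp only [(show (![D 0, D 1, (D 2)ᶜ, (D 3)ᶜ, (D 0)ᶜ, (D 1)ᶜ, D 2, D 3] : Fin 8 → Finset G) 0 = D 0 from rfl), (show (![D 0, D 1, (D 2)ᶜ, (D 3)ᶜ, (D 0)ᶜ, (D 1)ᶜ, D 2, D 3] : Fin 8 → Finset G) 1 = D 1 from rfl), (show (![D 0, D 1, (D 2)ᶜ, (D 3)ᶜ, (D 0)ᶜ, (D 1)ᶜ, D 2, D 3] : Fin 8 → Finset G) 2 = (D 2)ᶜ from rfl), (show (![D 0, D 1, (D 2)ᶜ, (D 3)ᶜ, (D 0)ᶜ, (D 1)ᶜ, D 2, D 3] : Fin 8 → Finset G) 3 = (D 3)ᶜ from rfl), (show (![D 0, D 1, (D 2)ᶜ, (D 3)ᶜ, (D 0)ᶜ, (D 1)ᶜ, D 2, D 3] : Fin 8 → Finset G) 4 = (D 0)ᶜ from rfl), (show (![D 0, D 1, (D 2)ᶜ, (D 3)ᶜ, (D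 0)ᶜ, (D 1)ᶜ, D 2, D 3] : Fin 8 → Finset G) 5 = (D 1)ᶜ from rfl), (show (![D 0, D 1, (D 2)ᶜ, (D 3)ᶜ, (D 0)ᶜ, (D 1)ᶜ, D 2, D 3] : Fin 8 → Finset G) 6 = D 2 from rfl), (show (![D 0, D 1, (D 2)ᶜ, (D 3)ᶜ, (D 0)ᶜ, (D 1)ᶜ, D 2, D 3] : Fin 8 → Finset G) 7 = D 3 from rfl), (show (![Gstar G \ E₀, Gstar G \ E₁, Gstar G \ E₀, Gstar G \ E₁, E₀, E₁, E₀, E₁] : Fin 8 → Finset G) 3 = Gstar G \ E₁ from rfl), (show bIdx 3 0 = 3 from rfl), (show bIdx 3 1 = 6 from rfl), (show bIdx 3 2 = 1 from rfl), (show bIdx 3 3 = 4 from rfl), (show bIdx 3 4 = 7 from rfl), (show bIdx 3 5 = 2 from rfl), (show bIdx 3 6 = 5 from rfl), (show bIdx 3 7 = 0 from rfl)]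
    simp only [kh_grp_compl, kh_grp_sdiff hE₀, kh_grp_sdiff hE₁, kh_grp_Gstar, map_sub, map_one]
  have hgC4 : grp (C 4) = embL G G' (grp (D 0)) * embR G G' (grp (B 4)) + embL G G' (grp (D 1)) * embR G G' (grp (B 5)) + (embL G G' (grp (Finset.univ : Finset G)) - embL G G' (grp (D 2))) * embR G G' (grp (B 6)) + (embL G G' (grp (Finset.univ : Finset G)) - embL G G' (grp (D 3))) * embR G G' (grp (B 7)) + (embL G G' (grp (Finset.univ : Finset G)) - embL G G' (grp (D 0))) * embR G G' (grp (B 0)) + (embL G G' (grp (Finset.univ : Finset G)) - embL G G' (grp (D 1))) * embR G G' (grp (B 1)) + embL G G' (grp (D 2)) * embR G G' (grp (B 2)) + embL G G' (grp (D 3)) * embR G G' (grp (B 3)) + embL G G' (grp (E₀)) := by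
    rw [hC 4, kh_grp_union (hdU 4), kh_grp_biUnion (hpd 4), Fin.sum_univ_eight]
    simp only [kh_grp_prod, kh_grp_singleton_zero, map_one, mul_one]
    simp only [(show (![D 0, D 1, (D 2)ᶜ, (D 3)ᶜ, (D 0)ᶜ, (D 1)ᶜ, D 2, D 3] : Fin 8 → Finset G) 0 = D 0 from rfl), (show (![D 0, D 1, (D 2)ᶜ, (D 3)ᶜ, (D 0)ᶜ, (D 1)ᶜ, D 2, D 3] : Fin 8 → Finset G) 1 = D 1 from rfl), (show (![D 0, D 1, (D 2)ᶜ, (D 3)ᶜ, (D 0)ᶜ, (D 1)ᶜ, D 2, D 3] : Fin 8 → Finset G) 2 = (D 2)ᶜ from rfl), (show (![D 0, D 1, (D 2)ᶜ, (D 3)ᶜ, (D 0)ᶜ, (D 1)ᶜ, D 2, D 3] : Fin 8 → Finset G) 3 = (D 3)ᶜ from rfl), (show (![D 0, D 1, (D 2)ᶜ, (D 3)ᶜ, (D 0)ᶜ, (D 1)ᶜ, D 2, D 3] : Fin 8 → Finset G) 4 = (D 0)ᶜ from rfl), (show (![D 0, D 1, (D 2)ᶜ, (D 3)ᶜ, (D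 0)ᶜ, (D 1)ᶜ, D 2, D 3] : Fin 8 → Finset G) 5 = (D 1)ᶜ from rfl), (show (![D 0, D 1, (D 2)ᶜ, (D 3)ᶜ, (D 0)ᶜ, (D 1)ᶜ, D 2, D 3] : Fin 8 → Finset G) 6 = D 2 from rfl), (show (![D 0, D 1, (D 2)ᶜ, (D 3)ᶜ, (D 0)ᶜ, (D 1)ᶜ, D 2, D 3] : Fin 8 → Finset G) 7 = D 3 from rfl), (show (![Gstar G \ E₀, Gstar G \ E₁, Gstar G \ E₀, Gstar G \ E₁, E₀, E₁, E₀, E₁] : Fin 8 → Finset G) 4 = E₀ from rfl), (show bIdx 4 0 = 4 from rfl), (show bIdx 4 1 = 5 from rfl), (show bIdx 4 2 = 6 from rfl), (show bIdx 4 3 = 7 from rfl), (show bIdx 4 4 = 0 from rfl), (show bIdx 4 5 = 1 from rfl), (show bIdx 4 6 = 2 from rfl), (show bIdx 4 7 = 3 from rfl)]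
    simp only [kh_grp_compl, kh_grp_sdiff hE₀, kh_grp_sdiff hE₁, kh_grp_Gstar, map_sub, map_one]
  have hgC5 : grp (C 5) = embL G G' (grp (D 0)) * embR G G' (grp (B 5)) + embL G G' (grp (D 1)) * embR G G' (grp (B 0)) + (embL G G' (grp (Finset.univ : Finset G)) - embL G G' (grp (D 2))) * embR G G' (grp (B 7)) + (embL G G' (grp (Finset.univ : Finset G)) - embL G G' (grp (D 3))) * embR G G' (grp (B 2)) + (embL G G' (grp (Finset.univ : Finset G)) - embL G G' (grp (D 0))) * embR G G' (grp (B 1)) + (embL G G' (grp (Finset.univ : Finset G)) - embL G G' (grp (D 1))) * embR G G' (grp (B 4)) + embL G G' (grp (D 2)) * embR G G' (grp (B 3)) + embL G G' (grp (D 3)) * embR G G' (grp (B 6)) + embL G G' (grp (E₁)) := by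
    rw [hC 5, kh_grp_union (hdU 5), kh_grp_biUnion (hpd 5), Fin.sum_univ_eight]
    simp only [kh_grp_prod, kh_grp_singleton_zero, map_one, mul_one]
    simp only [(show (![D 0, D 1, (D 2)ᶜ, (D 3)ᶜ, (D 0)ᶜ, (D 1)ᶜ, D 2, D 3] : Fin 8 → Finset G) 0 = D 0 from rfl), (show (![D 0, D 1, (D 2)ᶜ, (D 3)ᶜ, (D 0)ᶜ, (D 1)ᶜ, D 2, D 3] : Fin 8 → Finset G) 1 = D 1 from rfl), (show (![D 0, D 1, (D 2)ᶜ, (D 3)ᶜ, (D 0)ᶜ, (D 1)ᶜ, D 2, D 3] : Fin 8 → Finset G) 2 = (D 2)ᶜ from rfl), (show (![D 0, D 1, (D 2)ᶜ, (D 3)ᶜ, (D 0)ᶜ, (D 1)ᶜ, D 2, D 3] : Fin 8 → Finset G) 3 = (D 3)ᶜ from rfl), (show (![D 0, D 1, (D 2)ᶜ, (D 3)ᶜ, (D 0)ᶜ, (D 1)ᶜ, D 2, D 3] : Fin 8 → Finset G) 4 = (D 0)ᶜ from rfl), (show (![D 0, D 1, (D 2)ᶜ, (D 3)ᶜ, (D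 0)ᶜ, (D 1)ᶜ, D 2, D 3] : Fin 8 → Finset G) 5 = (D 1)ᶜ from rfl), (show (![D 0, D 1, (D 2)ᶜ, (D 3)ᶜ, (D 0)ᶜ, (D 1)ᶜ, D 2, D 3] : Fin 8 → Finset G) 6 = D 2 from rfl), (show (![D 0, D 1, (D 2)ᶜ, (D 3)ᶜ, (D 0)ᶜ, (D 1)ᶜ, D 2, D 3] : Fin 8 → Finset G) 7 = D 3 from rfl), (show (![Gstar G \ E₀, Gstar G \ E₁, Gstar G \ E₀, Gstar G \ E₁, E₀, E₁, E₀, E₁] : Fin 8 → Finset G) 5 = E₁ from rfl), (show bIdx 5 0 = 5 from rfl), (show bIdx 5 1 = 0 from rfl), (show bIdx 5 2 = 7 from rfl), (show bIdx 5 3 = 2 from rfl), (show bIdx 5 4 = 1 from rfl), (show bIdx 5 5 = 4 from rfl), (show bIdx 5 6 = 3 from rfl), (show bIdx 5 7 = 6 from rfl)]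
    simp only [kh_grp_compl, kh_grp_sdiff hE₀, kh_grp_sdiff hE₁, kh_grp_Gstar, map_sub, map_one]
  have hgC6 : grp (C 6) = embL G G' (grp (D 0)) * embR G G' (grp (B 6)) + embL G G' (grp (D 1)) * embR G G' (grp (B 7)) + (embL G G' (grp (Finset.univ : Finset G)) - embL G G' (grp (D 2))) * embR G G' (grp (B 4)) + (embL G G' (grp (Finset.univ : Finset G)) - embL G G' (grp (D 3))) * embR G G' (grp (B 5)) + (embL G G' (grp (Finset.univ : Finset G)) - embL G G' (grp (D 0))) * embR G G' (grp (B 2)) + (embL G G' (grp (Finset.univ : Finset G)) - embL G G' (grp (D 1))) * embR G G' (grp (B 3)) + embL G G' (grp (D 2)) * embR G G' (grp (B 0)) + embL G G' (grp (D 3)) * embR G G' (grp (B 1)) + embL G G' (grp (E₀)) := by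
    rw [hC 6, kh_grp_union (hdU 6), kh_grp_biUnion (hpd 6), Fin.sum_univ_eight]
    simp only [kh_grp_prod, kh_grp_singleton_zero, map_one, mul_one]
    simp only [(show (![D 0, D 1, (D 2)ᶜ, (D 3)ᶜ, (D 0)ᶜ, (D 1)ᶜ, D 2, D 3] : Fin 8 → Finset G) 0 = D 0 from rfl), (show (![D 0, D 1, (D 2)ᶜ, (D 3)ᶜ, (D 0)ᶜ, (D 1)ᶜ, D 2, D 3] : Fin 8 → Finset G) 1 = D 1 from rfl), (show (![D 0, D 1, (D 2)ᶜ, (D 3)ᶜ, (D 0)ᶜ, (D 1)ᶜ, D 2, D 3] : Fin 8 → Finset G) 2 = (D 2)ᶜ from rfl), (show (![D 0, D 1, (D 2)ᶜ, (D 3)ᶜ, (D 0)ᶜ, (D 1)ᶜ, D 2, D 3] : Fin 8 → Finset G) 3 = (D 3)ᶜ from rfl), (show (![D 0, D 1, (D 2)ᶜ, (D 3)ᶜ, (D 0)ᶜ, (D 1)ᶜ, D 2, D 3] : Fin 8 → Finset G) 4 = (D 0)ᶜ from rfl), (show (![D 0, D 1, (D 2)ᶜ, (D 3)ᶜ, (D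 0)ᶜ, (D 1)ᶜ, D 2, D 3] : Fin 8 → Finset G) 5 = (D 1)ᶜ from rfl), (show (![D 0, D 1, (D 2)ᶜ, (D 3)ᶜ, (D 0)ᶜ, (D 1)ᶜ, D 2, D 3] : Fin 8 → Finset G) 6 = D 2 from rfl), (show (![D 0, D 1, (D 2)ᶜ, (D 3)ᶜ, (D 0)ᶜ, (D 1)ᶜ, D 2, D 3] : Fin 8 → Finset G) 7 = D 3 from rfl), (show (![Gstar G \ E₀, Gstar G \ E₁, Gstar G \ E₀, Gstar G \ E₁, E₀, E₁, E₀, E₁] : Fin 8 → Finset G) 6 = E₀ from rfl), (show bIdx 6 0 = 6 from rfl), (show bIdx 6 1 = 7 from rfl), (show bIdx 6 2 = 4 from rfl), (show bIdx 6 3 = 5 from rfl), (show bIdx 6 4 = 2 from rfl), (show bIdx 6 5 = 3 from rfl), (show bIdx 6 6 = 0 from rfl), (show bIdx 6 7 = 1 from rfl)]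
    simp only [kh_grp_compl, kh_grp_sdiff hE₀, kh_grp_sdiff hE₁, kh_grp_Gstar, map_sub, map_one]
  have hgC7 : grp (C 7) = embL G G' (grp (D 0)) * embR G G' (grp (B 7)) + embL G G' (grp (D 1)) * embR G G' (grp (B 2)) + (embL G G' (grp (Finset.univ : Finset G)) - embL G G' (grp (D 2))) * embR G G' (grp (B 5)) + (embL G G' (grp (Finset.univ : Finset G)) - embL G G' (grp (D 3))) * embR G G' (grp (B 0)) + (embL G G' (grp (Finset.univ : Finset G)) - embL G G' (grp (D 0))) * embR G G' (grp (B 3)) + (embL G G' (grp (Finset.univ : Finset G)) - embL G G' (grp (D 1))) * embR G G' (grp (B 6)) + embL G G' (grp (D 2)) * embR G G' (grp (B 1)) + embL G G' (grp (D 3)) * embR G G' (grp (B 4)) + embL G G' (grp (E₁)) := by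
    rw [hC 7, kh_grp_union (hdU 7), kh_grp_biUnion (hpd 7), Fin.sum_univ_eight]
    simp only [kh_grp_prod, kh_grp_singleton_zero, map_one, mul_one]
    simp only [(show (![D 0, D 1, (D 2)ᶜ, (D 3)ᶜ, (D 0)ᶜ, (D 1)ᶜ, D 2, D 3] : Fin 8 → Finset G) 0 = D 0 from rfl), (show (![D 0, D 1, (D 2)ᶜ, (D 3)ᶜ, (D 0)ᶜ, (D 1)ᶜ, D 2, D 3] : Fin 8 → Finset G) 1 = D 1 from rfl), (show (![D 0, D 1, (D 2)ᶜ, (D 3)ᶜ, (D 0)ᶜ, (D 1)ᶜ, D 2, D 3] : Fin 8 → Finset G) 2 = (D 2)ᶜ from rfl), (show (![D 0, D 1, (D 2)ᶜ, (D 3)ᶜ, (D 0)ᶜ, (D 1)ᶜ, D 2, D 3] : Fin 8 → Finset G) 3 = (D 3)ᶜ from rfl), (show (![D 0, D 1, (D 2)ᶜ, (D 3)ᶜ, (D 0)ᶜ, (D 1)ᶜ, D 2, D 3] : Fin 8 → Finset G) 4 = (D 0)ᶜ from rfl), (show (![D 0, D 1, (D 2)ᶜ, (D 3)ᶜ, (D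 0)ᶜ, (D 1)ᶜ, D 2, D 3] : Fin 8 → Finset G) 5 = (D 1)ᶜ from rfl), (show (![D 0, D 1, (D 2)ᶜ, (D 3)ᶜ, (D 0)ᶜ, (D 1)ᶜ, D 2, D 3] : Fin 8 → Finset G) 6 = D 2 from rfl), (show (![D 0, D 1, (D 2)ᶜ, (D 3)ᶜ, (D 0)ᶜ, (D 1)ᶜ, D 2, D 3] : Fin 8 → Finset G) 7 = D 3 from rfl), (show (![Gstar G \ E₀, Gstar G \ E₁, Gstar G \ E₀, Gstar G \ E₁, E₀, E₁, E₀, E₁] : Fin 8 → Finset G) 7 = E₁ from rfl), (show bIdx 7 0 = 7 from rfl), (show bIdx 7 1 = 2 from rfl), (show bIdx 7 2 = 5 from rfl), (show bIdx 7 3 = 0 from rfl), (show bIdx 7 4 = 3 from rfl), (show bIdx 7 5 = 6 from rfl), (show bIdx 7 6 = 1 from rfl), (show bIdx 7 7 = 4 from rfl)]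
    simp only [kh_grp_compl, kh_grp_sdiff hE₀, kh_grp_sdiff hE₁, kh_grp_Gstar, map_sub, map_one]
  have key := kh_key (embL G G' (grp (D 0))) (embL G G' (grp (D 1))) (embL G G' (grp (D 2))) (embL G G' (grp (D 3))) (embL G G' (grp E₀)) (embL G G' (grp E₁)) (embL G G' (grp (Finset.univ : Finset G))) (embR G G' (grp (B 0))) (embR G G' (grp (B 1))) (embR G G' (grp (B 2))) (embR G G' (grp (B 3))) (embR G G' (grp (B 4))) (embR G G' (grp (B 5))) (embR G G' (grp (B 6))) (embR G G' (grp (B 7))) (embR G G' (grp (Finset.univ : Finset G'))) (Fintype.card G : AddMonoidAlgebra ℤ (G × G')) (Fintype.card G' : AddMonoidAlgebra ℤ (G × G')) (((D 0).card : AddMonoidAlgebra ℤ (G × G'))) (((D 1).card : AddMonoidAlgebra ℤ (G × G'))) (((D 2).card : AddMonoidAlgebra ℤ (G × G'))) (((D 3).card : AddMonoidAlgebra ℤ (G × G'))) ((E₀.card : AddMonoidAlgebra ℤ (G × G'))) ((E₁.card : AddMonoidAlgebra ℤ (G × G'))) hr1 hr2 hr3 hr4 hr5 hr6 hr7 hau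 hax0 hax1 hax2 hax3 hap haq hbu
  have hUU : grp (Finset.univ : Finset (G × G')) =
      embL G G' (grp (Finset.univ : Finset G)) * embR G G' (grp (Finset.univ : Finset G')) := by
    rw [← Finset.univ_product_univ, kh_grp_prod]
  rw [Fin.sum_univ_eight, hgC0, hgC1, hgC2, hgC3, hgC4, hgC5, hgC6, hgC7,
    kh_grp_Gstar, hUU, ← AddMonoidAlgebra.one_def, zsmul_eq_mul, zsmul_eq_mul]
  push_cast
  linear_combination key
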